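/- For every n ∈ ℕ, the square consisting of multiplication by f^n on R, multiplication by ι(f)^n on R̂, and the two completion maps ι, is Cartesian as a square of R-modules: for every x ∈ R and ŷ ∈ R̂ with ι(x) = ι(f)^n · ŷ, there exists a unique y ∈ R with f^n · y = x and ι(y) = ŷ. -/

import Mathlib

noncomputable section

variable (R : Type*) [CommRing R] (f : R)

/-- The `(f)`-adic completion `R̂` of `R`. -/
abbrev Rhat : Type _ := AdicCompletion (Ideal.span {f}) R

open AdicCompletion in
lemma eq_zero_iff_evala (I : Ideal R) (x : AdicCompletion I R) :
    x = 0 ↔ ∀ n, evalₐ I n x = 0 := by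
  constructor
  · rintro rfl n; simp
  · intro h
    apply AdicCompletion.ext
    intro n
    have heq : (I ^ n • ⊤ : Ideal R) = I ^ n := by ext y; simp
    have := h n
    rw [show evalₐ I n x = (Ideal.quotientEquivAlgOfEq R heq)
      (AdicCompletion.eval I R n x) from rfl] at this
    have h2 : AdicCompletion.eval I R n x = 0 := by
      apply (Ideal.quotientEquivAlgOfEq R heq).injective
      simpa using this
    exact h2

open AdicCompletion in
lemma mul_f_eq_zero (hf : f ∈ nonZeroDivisors R) (a : Rhat R f)
    (h : algebraMap R (Rhat R f) f * a = 0) : a = 0 := by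
  obtain ⟨a, rfl⟩ := AdicCompletion.mk_surjective (Ideal.span {f}) R a
  rw [← Algebra.smul_def, ← map_smul] at h
  rw [eq_zero_iff_evala] at h ⊢
  intro n
  have h1 := h (n + 1)
  rw [evalₐ_mk, Ideal.Quotient.eq_zero_iff_mem] at h1 ⊢
  have hval : (f • a).val (n + 1) = f * a.val (n + 1) := rfl
  rw [hval, Ideal.span_singleton_pow, Ideal.mem_span_singleton] at h1
  obtain ⟨c, hc⟩ := h1
  have hcancel : a.val (n + 1) = f ^ n * c :=
    (mul_cancel_left_mem_nonZeroDivisors hf).mp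
      (show f * a.val (n + 1) = f * (f ^ n * c) by rw [hc]; ring)
  have hmem : a.val (n + 1) ∈ Ideal.span {f} ^ n := by
    rw [Ideal.span_singleton_pow, Ideal.mem_span_singleton]
    exact ⟨c, hcancel⟩
  have hcauchy : a.val n - a.val (n + 1) ∈ Ideal.span {f} ^ n := by
    have := a.property (Nat.le_succ n)
    rw [SModEq.sub_mem] at this
    simpa using this
  have : a.val n = (a.val n - a.val (n + 1)) + a.val (n + 1) := by ring
  rw [this]
  exact add_mem hcauchy hmem

lemma mul_fpow_eq_zero (hf : f ∈ nonZeroDivisors R) (n : ℕ) (a : Rhat R f)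
    (h : algebraMap R (Rhat R f) f ^ n * a = 0) : a = 0 := by
  induction n with
  | zero => simpa using h
  | succ k ih =>
    apply ih
    apply mul_f_eq_zero R f hf
    rw [← h]; ring

/-- for every `n`, the square given by multiplication by `f^n` on `R`,
multiplication by `ι(f)^n` on `R̂`, and the completion map `ι`, is Cartesian:
for every `x : R` and `ŷ : R̂` with `ι x = ι(f)^n * ŷ` there is a unique `y : R` with
`f^n * y = x` and `ι y = ŷ`. -/
theorem stmt2 [IsNoetherianRing R] (hf : f ∈ nonZeroDivisors R) (n : ℕ)
    (x : R) (yhat : Rhat R f)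
    (h : algebraMap R (Rhat R f) x = (algebraMap R (Rhat R f) f) ^ n * yhat) :
    ∃! y : R, f ^ n * y = x ∧ algebraMap R (Rhat R f) y = yhat := by
  -- first: x is divisible by f ^ n
  have hx : ∃ y, x = f ^ n * y := by
    have h1 := congrArg (AdicCompletion.evalₐ (Ideal.span {f}) n) h
    rw [map_mul, map_pow] at h1
    rw [show AdicCompletion.evalₐ (Ideal.span {f}) n (algebraMap R (Rhat R f) x)
        = Ideal.Quotient.mk (Ideal.span {f} ^ n) x from
      (AdicCompletion.evalₐ (Ideal.span {f}) n).commutes x] at h1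
    rw [show AdicCompletion.evalₐ (Ideal.span {f}) n (algebraMap R (Rhat R f) f)
        = Ideal.Quotient.mk (Ideal.span {f} ^ n) f from
      (AdicCompletion.evalₐ (Ideal.span {f}) n).commutes f] at h1
    have hz : (Ideal.Quotient.mk (Ideal.span {f} ^ n) f) ^ n = 0 := by
      rw [← map_pow, Ideal.Quotient.eq_zero_iff_mem, Ideal.span_singleton_pow,
        Ideal.mem_span_singleton]
    rw [hz, zero_mul, Ideal.Quotient.eq_zero_iff_mem, Ideal.span_singleton_pow,
      Ideal.mem_span_singleton] at h1
    obtain ⟨y, hy⟩ := h1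
    exact ⟨y, hy⟩
  obtain ⟨y, rfl⟩ := hx
  refine ⟨y, ⟨rfl, ?_⟩, ?_⟩
  · -- ι y = yhat
    have hzero : (algebraMap R (Rhat R f) f) ^ n * (algebraMap R (Rhat R f) y - yhat) = 0 := by
      rw [mul_sub, ← h, ← map_pow, ← map_mul, sub_self]
    exact sub_eq_zero.mp (mul_fpow_eq_zero R f hf n _ hzero)
  · rintro y' ⟨hy', -⟩
    exact (mul_cancel_left_mem_nonZeroDivisors (pow_mem hf n)).mp hy'
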